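/- With the Fock space operators a_i^+ defined by the explicit action formulas on the basis of W_p, for all i < j the creation operators q-supercommute: a_i^+ a_j^+ - (-1)^{θ_i θ_j} q · a_j^+ a_i^+ = 0 as operators on W_p. -/
import Mathlib


noncomputable section

/-- q-integer [x] = (q^x - q^{-x})/(q - q^{-1}). -/
def qb (q : ℝ) (x : ℤ) : ℝ := (q ^ x - q ^ (-x)) / (q - q⁻¹)

/-- q-factorial [x]! = [1][2]⋯[x]. -/
def qfact (q : ℝ) (x : ℕ) : ℝ := ∏ k ∈ Finset.Icc 1 x, qb q (k : ℤ)

/-- Free module on all tuples; the Fock space W_p is spanned by valid tuples. -/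
abbrev Wp (N : ℕ) := (Fin N → ℕ) →₀ ℝ

/-- θ grading: 0 for the first n (bosonic) indices, 1 for the rest (fermionic). -/
def th (n : ℕ) {N : ℕ} (i : Fin N) : ℕ := if (i : ℕ) < n then 0 else 1

/-- valid tuples: fermionic entries ≤ 1 and total sum ≤ p. -/
def valid (n : ℕ) {N : ℕ} (p : ℕ) (r : Fin N → ℕ) : Prop :=
  (∀ i : Fin N, n ≤ (i : ℕ) → r i ≤ 1) ∧ ∑ i, r i ≤ p

/-- sign (-1)^{θ_i (θ_1 r_1 + ⋯ + θ_{i-1} r_{i-1})}. -/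
def sgn (n : ℕ) {N : ℕ} (i : Fin N) (r : Fin N → ℕ) : ℝ :=
  (-1 : ℝ) ^ (th n i * ∑ j ∈ Finset.univ.filter (fun j : Fin N => j < i), th n j * r j)

/-- r_1 + ⋯ + r_{i-1}. -/
def Ssum {N : ℕ} (i : Fin N) (r : Fin N → ℕ) : ℕ :=
  ∑ j ∈ Finset.univ.filter (fun j : Fin N => j < i), r j

/-- creation operator a_i^+. -/
def aP (n : ℕ) {N : ℕ} (p : ℕ) (q : ℝ) (i : Fin N) : Wp N →ₗ[ℝ] Wp N :=
  Finsupp.lift (Wp N) ℝ (Fin N → ℕ) fun r =>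
    (sgn n i r * q ^ (-(Ssum i r : ℤ)) * (1 - (th n i : ℝ) * (r i : ℝ)) *
      Real.sqrt (qb q ((r i : ℤ) + 1) * qb q ((p : ℤ) - ∑ l, (r l : ℤ)))) •
      Finsupp.single (Function.update r i (r i + 1)) 1

/-- annihilation operator a_i^-. -/
def aM (n : ℕ) {N : ℕ} (p : ℕ) (q : ℝ) (i : Fin N) : Wp N →ₗ[ℝ] Wp N :=
  Finsupp.lift (Wp N) ℝ (Fin N → ℕ) fun r =>
    (sgn n i r * q ^ ((Ssum i r : ℤ)) *
      Real.sqrt (qb q (r i : ℤ) * qb q ((p : ℤ) - ∑ l, (r l : ℤ) + 1))) •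
      Finsupp.single (Function.update r i (r i - 1)) 1

/-- Cartan operator H_i, diagonal on the basis. -/
def Hop (n : ℕ) {N : ℕ} (p : ℕ) (i : Fin N) : Wp N →ₗ[ℝ] Wp N :=
  Finsupp.lift (Wp N) ℝ (Fin N → ℕ) fun r =>
    ((p : ℝ) - (-1 : ℝ) ^ th n i * (r i : ℝ) - ∑ j, (r j : ℝ)) • Finsupp.single r 1

/-! ### Auxiliary lemmas -/

/-- coefficient of the creation operator. -/
def coefP (n : ℕ) {N : ℕ} (p : ℕ) (q : ℝ) (k : Fin N) (s : Fin N → ℕ) : ℝ :=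
  sgn n k s * q ^ (-(Ssum k s : ℤ)) * (1 - (th n k : ℝ) * (s k : ℝ)) *
    Real.sqrt (qb q ((s k : ℤ) + 1) * qb q ((p : ℤ) - ∑ l, (s l : ℤ)))

lemma aP_single (n : ℕ) {N : ℕ} (p : ℕ) (q : ℝ) (k : Fin N) (s : Fin N → ℕ) :
    aP n p q k (Finsupp.single s 1) =
      coefP n p q k s • Finsupp.single (Function.update s k (s k + 1)) 1 := by
  simp [aP, coefP, Finsupp.lift_apply, Finsupp.sum_single_index]

lemma qb_nonneg {q : ℝ} (hq : 0 < q) (hq1 : q ≠ 1) {x : ℤ} (hx : 0 ≤ x) : 0 ≤ qb q x := by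
  have hx' : -x ≤ x := neg_le_self hx
  rcases lt_or_gt_of_ne hq1 with h | h
  · have hqi : 1 < q⁻¹ := (one_lt_inv₀ hq).mpr h
    have h1 : q ^ x - q ^ (-x) ≤ 0 :=
      sub_nonpos.mpr (zpow_le_zpow_right_of_le_one₀ hq h.le hx')
    have h2 : q - q⁻¹ ≤ 0 := by linarith
    exact div_nonneg_iff.mpr (Or.inr ⟨h1, h2⟩)
  · have hqi : q⁻¹ < 1 := inv_lt_one_of_one_lt₀ h
    have h1 : 0 ≤ q ^ x - q ^ (-x) :=
      sub_nonneg.mpr (zpow_le_zpow_right₀ h.le hx')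
    have h2 : 0 ≤ q - q⁻¹ := by linarith
    exact div_nonneg h1 h2

lemma sqrt_swap {a b : ℝ} (ha : 0 ≤ a) (hb : 0 ≤ b) (c d : ℝ) :
    Real.sqrt (a * d) * Real.sqrt (b * c) = Real.sqrt (b * d) * Real.sqrt (a * c) := by
  rcases le_or_gt 0 d with hd | hd
  · rw [Real.sqrt_mul ha, Real.sqrt_mul hb, Real.sqrt_mul hb, Real.sqrt_mul ha]
    ring
  · rw [Real.sqrt_eq_zero'.mpr (mul_nonpos_iff.mpr (Or.inl ⟨ha, hd.le⟩)),
      Real.sqrt_eq_zero'.mpr (mul_nonpos_iff.mpr (Or.inl ⟨hb, hd.le⟩))]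
    ring

lemma sum_cast_update {N : ℕ} (r : Fin N → ℕ) (k : Fin N) :
    (∑ l, ((Function.update r k (r k + 1)) l : ℤ)) = (∑ l, (r l : ℤ)) + 1 := by
  rw [← Finset.add_sum_erase _ (fun l => ((Function.update r k (r k + 1)) l : ℤ))
      (Finset.mem_univ k),
    ← Finset.add_sum_erase _ (fun l => ((r l : ℕ) : ℤ)) (Finset.mem_univ k),
    Finset.sum_congr rfl
      (fun l hl => by rw [Function.update_of_ne (Finset.ne_of_mem_erase hl)]),
    Function.update_self]
  push_cast
  ring

lemma key (n p : ℕ) {N : ℕ} (q : ℝ) (hq : 0 < q) (hq1 : q ≠ 1)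
    (i j : Fin N) (hij : i < j) (r : Fin N → ℕ) :
    coefP n p q j r * coefP n p q i (Function.update r j (r j + 1)) -
      ((-1 : ℝ) ^ (th n i * th n j) * q) *
        (coefP n p q i r * coefP n p q j (Function.update r i (r i + 1))) = 0 := by
  classical
  have hq0 : q ≠ 0 := ne_of_gt hq
  have hij' : i ≠ j := ne_of_lt hij
  -- components for the update at j (seen from i)
  have h1 : sgn n i (Function.update r j (r j + 1)) = sgn n i r := by
    rw [sgn, sgn, Finset.sum_congr rfl (fun k hk => by
      simp only [Finset.mem_filter] at hk
      rw [Function.update_of_ne (ne_of_lt (hk.2.trans hij))])]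
  have h2 : Ssum i (Function.update r j (r j + 1)) = Ssum i r := by
    rw [Ssum, Ssum, Finset.sum_congr rfl (fun k hk => by
      simp only [Finset.mem_filter] at hk
      rw [Function.update_of_ne (ne_of_lt (hk.2.trans hij))])]
  have h3 : Function.update r j (r j + 1) i = r i := Function.update_of_ne hij' _ _
  have h4 := sum_cast_update r j
  -- components for the update at i (seen from j)
  have hset : i ∈ Finset.univ.filter (fun k : Fin N => k < j) := by
    simp [hij]
  have h5sum : ∑ k ∈ Finset.univ.filter (fun k : Fin N => k < j),
        th n k * (Function.update r i (r i + 1)) k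
      = (∑ k ∈ Finset.univ.filter (fun k : Fin N => k < j), th n k * r k) + th n i := by
    rw [← Finset.add_sum_erase _ (fun k => th n k * (Function.update r i (r i + 1)) k) hset,
      ← Finset.add_sum_erase _ (fun k => th n k * r k) hset,
      Finset.sum_congr rfl (fun k hk => by
        rw [Function.update_of_ne (Finset.ne_of_mem_erase hk)]),
      Function.update_self]
    ring
  have h5 : sgn n j (Function.update r i (r i + 1))
      = sgn n j r * (-1 : ℝ) ^ (th n j * th n i) := by
    rw [sgn, sgn, h5sum, Nat.mul_add, pow_add]
  have h6 : Ssum j (Function.update r i (r i + 1)) = Ssum j r + 1 := by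
    rw [Ssum, Ssum, ← Finset.add_sum_erase _ (fun k => (Function.update r i (r i + 1)) k) hset,
      ← Finset.add_sum_erase _ r hset,
      Finset.sum_congr rfl (fun k hk => by
        rw [Function.update_of_ne (Finset.ne_of_mem_erase hk)]),
      Function.update_self]
    ring
  have h7 : Function.update r i (r i + 1) j = r j := Function.update_of_ne hij'.symm _ _
  have h8 := sum_cast_update r i
  have h9 : q ^ (-((Ssum j r + 1 : ℕ) : ℤ)) = q ^ (-(Ssum j r : ℤ)) * q⁻¹ := by
    push_cast
    rw [neg_add, zpow_add₀ hq0, zpow_neg_one]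
  simp only [coefP, h1, h2, h3, h4, h5, h6, h7, h8, h9]
  have hE : ((-1 : ℝ) ^ (th n i * th n j)) * ((-1 : ℝ) ^ (th n j * th n i)) = 1 := by
    rw [mul_comm (th n j), ← pow_add, ← two_mul, pow_mul]
    norm_num
  have hqq : q * q⁻¹ = 1 := mul_inv_cancel₀ hq0
  have ha : 0 ≤ qb q ((r i : ℤ) + 1) :=
    qb_nonneg hq hq1 (by positivity)
  have hb : 0 ≤ qb q ((r j : ℤ) + 1) :=
    qb_nonneg hq hq1 (by positivity)
  have hs := sqrt_swap ha hb (qb q ((p : ℤ) - ∑ l, (r l : ℤ)))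
      (qb q ((p : ℤ) - ((∑ l, (r l : ℤ)) + 1)))
  set S1 := sgn n i r
  set S2 := sgn n j r
  set Q1 := q ^ (-(Ssum i r : ℤ))
  set Q2 := q ^ (-(Ssum j r : ℤ))
  set T1 := (1 - (th n i : ℝ) * (r i : ℝ))
  set T2 := (1 - (th n j : ℝ) * (r j : ℝ))
  set A := qb q ((r i : ℤ) + 1)
  set B := qb q ((r j : ℤ) + 1)
  set C := qb q ((p : ℤ) - ∑ l, (r l : ℤ))
  set D := qb q ((p : ℤ) - ((∑ l, (r l : ℤ)) + 1))
  set P := S1 * S2 * Q1 * Q2 * T1 * T2 with hP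
  linear_combination P * hs
    - (P * Real.sqrt (B * D) * Real.sqrt (A * C) * q * q⁻¹) * hE
    - (P * Real.sqrt (B * D) * Real.sqrt (A * C)) * hqq

/-- The creation operators q-supercommute: for i < j,
a_i^+ a_j^+ - (-1)^{θ_i θ_j} q · a_j^+ a_i^+ = 0 on W_p. -/
theorem creation_q_supercommute (n m p : ℕ) (hn : 1 ≤ n) (hm : 1 ≤ m) (hp : 1 ≤ p)
    (q : ℝ) (hq : 0 < q) (hq1 : q ≠ 1) (i j : Fin (n + m)) (hij : i < j)
    (r : Fin (n + m) → ℕ) (hr : valid n p r) :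
    aP n p q i (aP n p q j (Finsupp.single r 1)) -
        ((-1 : ℝ) ^ (th n i * th n j) * q) •
          aP n p q j (aP n p q i (Finsupp.single r 1)) = 0 := by
  classical
  have hij' : i ≠ j := ne_of_lt hij
  simp only [aP_single, map_smul, smul_smul]
  have hb' : Function.update (Function.update r j (r j + 1)) i
        ((Function.update r j (r j + 1)) i + 1)
      = Function.update (Function.update r i (r i + 1)) j
        ((Function.update r i (r i + 1)) j + 1) := by
    rw [Function.update_of_ne hij', Function.update_of_ne hij'.symm,
      Function.update_comm hij'.symm]
  rw [hb', ← sub_smul,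
    show coefP n p q j r * coefP n p q i (Function.update r j (r j + 1)) -
        (-1 : ℝ) ^ (th n i * th n j) * q *
          (coefP n p q i r * coefP n p q j (Function.update r i (r i + 1))) = 0 from
      by linear_combination key n p q hq hq1 i j hij r,
    zero_smul]
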